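/- Let k, n, d, w, t be positive integers with 2 ≤ k ≤ n and w(k−1) ≤ t − (w−1)d. If n · C(n−1, k−1) · ((w(k−1) − (w−1)/2)/(t − (w−1)d − (w−1)/2))^w < 1, then there exists a (k,n,d,w)-superimposed code of length t. -/

import Mathlib

/-- Any two 1's in the binary vector `v` are separated by a run of at least `d` 0's:
if coordinates `i < j` both equal 1 then `j - i ≥ d + 1`. -/
def RunConstrained {t : ℕ} (d : ℕ) (v : Fin t → Bool) : Prop :=
  ∀ i j : Fin t, i < j → v i = true → v j = true → (i : ℕ) + d + 1 ≤ (j : ℕ)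

/-- `M` (a `t × n` binary matrix) is a `(k,n,d)`-superimposed code: every column satisfies
the runlength constraint `d`, and for every set of `k` columns and every column `c` of the
set there is a row where `c` has a 1 and all other columns of the set have a 0. -/
def IsSuperimposedCode (k n d t : ℕ) (M : Fin t → Fin n → Bool) : Prop :=
  (∀ j : Fin n, RunConstrained d (fun i => M i j)) ∧
  ∀ S : Finset (Fin n), S.card = k → ∀ j ∈ S,
    ∃ i : Fin t, M i j = true ∧ ∀ j' ∈ S, j' ≠ j → M i j' = false

/-- Every column of `M` has Hamming weight exactly `w`. -/
def ColWeight (w : ℕ) {t n : ℕ} (M : Fin t → Fin n → Bool) : Prop :=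
  ∀ j : Fin n, (Finset.univ.filter (fun i => M i j = true)).card = w



open Finset in
lemma myCastDesc (a w : ℕ) (h : w ≤ a) :
    ((Nat.choose a w : ℕ) : ℝ) * (Nat.factorial w) = ∏ i ∈ range w, ((a : ℝ) - i) := by
  have h1 : (a.descFactorial w : ℝ) = ∏ i ∈ range w, ((a : ℝ) - i) := by
    rw [Nat.descFactorial_eq_prod_range]
    push_cast
    refine Finset.prod_congr rfl fun i hi => ?_
    have : i ≤ a := le_trans (le_of_lt (mem_range.mp hi)) h
    rw [Nat.cast_sub this]
  rw [← h1, Nat.descFactorial_eq_factorial_mul_choose]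
  push_cast; ring

open Finset in
lemma chooseRatio (s T w : ℕ) (hw : 0 < w) (hsw : w ≤ s) (hsT : s ≤ T) :
    ((Nat.choose s w : ℕ) : ℝ) ≤ (Nat.choose T w : ℕ) *
      (((s : ℝ) - ((w : ℝ) - 1) / 2) / ((T : ℝ) - ((w : ℝ) - 1) / 2)) ^ w := by
  set m : ℝ := ((w : ℝ) - 1) / 2 with hm
  have hwr : (1 : ℝ) ≤ (w : ℝ) := by exact_mod_cast hw
  have hsr : (w : ℝ) ≤ (s : ℝ) := by exact_mod_cast hsw
  have hTr : (s : ℝ) ≤ (T : ℝ) := by exact_mod_cast hsT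
  have hsm : 0 < (s : ℝ) - m := by rw [hm]; linarith
  have hTm : 0 < (T : ℝ) - m := by rw [hm]; linarith
  set R : ℝ := ((s : ℝ) - m) / ((T : ℝ) - m) with hR
  have hRpos : 0 < R := div_pos hsm hTm
  have hile : ∀ i ∈ range w, (i : ℝ) ≤ (w : ℝ) - 1 := by
    intro i hi
    have h1 : i + 1 ≤ w := mem_range.mp hi
    have : ((i : ℕ) : ℝ) + 1 ≤ (w : ℝ) := by exact_mod_cast h1
    linarith
  have hfs : ∀ i ∈ range w, (0:ℝ) ≤ (s : ℝ) - i := fun i hi => by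
    have := hile i hi; linarith
  have hfT : ∀ i ∈ range w, (0:ℝ) ≤ (T : ℝ) - i := fun i hi => by
    have := hile i hi; linarith
  -- key product inequality
  have key : (∏ i ∈ range w, ((s : ℝ) - i)) ≤ R ^ w * ∏ i ∈ range w, ((T : ℝ) - i) := by
    have hPs : 0 ≤ ∏ i ∈ range w, ((s : ℝ) - i) := Finset.prod_nonneg hfs
    have hPT : 0 ≤ R ^ w * ∏ i ∈ range w, ((T : ℝ) - i) :=
      mul_nonneg (le_of_lt (pow_pos hRpos w)) (Finset.prod_nonneg hfT)
    have hsq : (∏ i ∈ range w, ((s : ℝ) - i)) ^ 2 ≤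
        (R ^ w * ∏ i ∈ range w, ((T : ℝ) - i)) ^ 2 := by
      have e1 : (∏ i ∈ range w, ((s : ℝ) - i)) ^ 2 =
          ∏ i ∈ range w, (((s : ℝ) - i) * ((s : ℝ) - (w - 1 - i : ℕ))) := by
        rw [Finset.prod_mul_distrib, sq]
        congr 1
        exact (Finset.prod_range_reflect (fun i => (s : ℝ) - i) w).symm
      have e2 : (R ^ w * ∏ i ∈ range w, ((T : ℝ) - i)) ^ 2 =
          ∏ i ∈ range w, (R ^ 2 * (((T : ℝ) - i) * ((T : ℝ) - (w - 1 - i : ℕ)))) := by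
        rw [Finset.prod_mul_distrib, Finset.prod_mul_distrib, Finset.prod_const,
          Finset.card_range, ← pow_mul]
        rw [show (∏ i ∈ range w, ((T:ℝ) - (w - 1 - i : ℕ))) = ∏ i ∈ range w, ((T:ℝ) - i) from
          Finset.prod_range_reflect (fun i => (T : ℝ) - i) w]
        ring
      rw [e1, e2]
      apply Finset.prod_le_prod
      · intro i hi
        apply mul_nonneg (hfs i hi)
        have : (w - 1 - i : ℕ) ∈ range w := by
          have := mem_range.mp hi; apply mem_range.mpr; omega
        exact hfs _ this
      · intro i hi
        have hiw : i < w := mem_range.mp hi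
        have hcast : ((w - 1 - i : ℕ) : ℝ) = (w : ℝ) - 1 - i := by
          have : (w - 1 - i : ℕ) = w - 1 - i := rfl
          push_cast [Nat.cast_sub (by omega : i ≤ w - 1), Nat.cast_sub (by omega : 1 ≤ w)]
          ring
        rw [hcast, hR, div_pow, div_mul_eq_mul_div, le_div_iff₀ (by positivity)]
        set a : ℝ := (i : ℝ)
        have ham : ((s:ℝ) - a) * ((s:ℝ) - ((w:ℝ) - 1 - a)) * ((T:ℝ) - m) ^ 2 ≤
            ((s:ℝ) - m) ^ 2 * (((T:ℝ) - a) * ((T:ℝ) - ((w:ℝ) - 1 - a))) := by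
          have hkey : 0 ≤ (m - a)^2 * (((T:ℝ) - m)^2 - ((s:ℝ) - m)^2) := by
            apply mul_nonneg (sq_nonneg _)
            nlinarith
          have hmm : (w : ℝ) - 1 = 2 * m := by rw [hm]; ring
          rw [hmm]
          nlinarith [hkey]
        exact ham
    exact (pow_le_pow_iff_left₀ hPs hPT (by norm_num)).mp hsq
  -- conclude via factorial
  have hfac : (0:ℝ) < (Nat.factorial w : ℝ) := by exact_mod_cast Nat.factorial_pos w
  have h1 := myCastDesc s w hsw
  have h2 := myCastDesc T w (le_trans hsw hsT)
  rw [← h1, ← h2] at key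
  have key2 : ((Nat.choose s w : ℕ) : ℝ) * (Nat.factorial w) ≤
      (((Nat.choose T w : ℕ) : ℝ) * R ^ w) * (Nat.factorial w) := by
    calc ((Nat.choose s w : ℕ) : ℝ) * (Nat.factorial w)
        ≤ R ^ w * (((Nat.choose T w : ℕ) : ℝ) * (Nat.factorial w)) := key
      _ = (((Nat.choose T w : ℕ) : ℝ) * R ^ w) * (Nat.factorial w) := by ring
  exact le_of_mul_le_mul_right key2 hfac

section Spread

open Finset

variable (d : ℕ)

def spread (A : Finset ℕ) (a : ℕ) : ℕ := a + (A.filter (fun x => x < a)).card * d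

lemma spread_gap {A : Finset ℕ} {a b : ℕ} (ha : a ∈ A) (hab : a < b) :
    spread d A a + d + 1 ≤ spread d A b := by
  have hsub : insert a (A.filter (fun x => x < a)) ⊆ A.filter (fun x => x < b) := by
    intro x hx
    rcases mem_insert.mp hx with rfl | hx
    · exact mem_filter.mpr ⟨ha, hab⟩
    · have := mem_filter.mp hx
      exact mem_filter.mpr ⟨this.1, lt_trans this.2 hab⟩
  have hcard : (A.filter (fun x => x < a)).card + 1 ≤ (A.filter (fun x => x < b)).card := by
    have h2 := card_le_card hsub
    rwa [card_insert_of_notMem (by simp)] at h2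
  have h3 : ((A.filter (fun x => x < a)).card + 1) * d ≤ (A.filter (fun x => x < b)).card * d :=
    Nat.mul_le_mul_right d hcard
  rw [add_mul, one_mul] at h3
  unfold spread
  omega

lemma spread_lt_iff {A : Finset ℕ} {a b : ℕ} (ha : a ∈ A) (hb : b ∈ A) :
    spread d A a < spread d A b ↔ a < b := by
  constructor
  · intro h
    by_contra hc
    push_neg at hc
    rcases lt_or_eq_of_le hc with h2 | h2
    · have := spread_gap d hb h2; omega
    · subst h2; omega
  · intro h
    have := spread_gap d ha h; omega

lemma spread_injOn {A : Finset ℕ} : Set.InjOn (spread d A) A := by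
  intro a ha b hb hab
  by_contra hne
  rcases lt_or_gt_of_ne hne with h | h
  · have := (spread_lt_iff d ha hb).mpr h; omega
  · have := (spread_lt_iff d hb ha).mpr h; omega

lemma filter_image_spread {A : Finset ℕ} {a : ℕ} (ha : a ∈ A) :
    (A.image (spread d A)).filter (fun x => x < spread d A a) =
      (A.filter (fun x => x < a)).image (spread d A) := by
  ext x
  simp only [mem_filter, mem_image]
  constructor
  · rintro ⟨⟨b, hb, rfl⟩, hlt⟩
    exact ⟨b, ⟨hb, (spread_lt_iff d hb ha).mp hlt⟩, rfl⟩
  · rintro ⟨b, ⟨hb1, hb2⟩, rfl⟩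
    exact ⟨⟨b, hb1, rfl⟩, (spread_lt_iff d hb1 ha).mpr hb2⟩

def unspread (E : Finset ℕ) (x : ℕ) : ℕ := x - (E.filter (fun y => y < x)).card * d

lemma unspread_spread {A : Finset ℕ} {a : ℕ} (ha : a ∈ A) :
    unspread d (A.image (spread d A)) (spread d A a) = a := by
  unfold unspread
  rw [filter_image_spread d ha, card_image_of_injOn
    (Set.InjOn.mono (fun x hx => (mem_filter.mp hx).1) (spread_injOn d))]
  unfold spread
  omega

lemma image_unspread (A : Finset ℕ) :
    (A.image (spread d A)).image (unspread d (A.image (spread d A))) = A := by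
  rw [image_image]
  have : ∀ a ∈ A, (unspread d (A.image (spread d A)) ∘ spread d A) a = id a := by
    intro a ha
    simp only [Function.comp_apply, id_eq]
    exact unspread_spread d ha
  rw [image_congr this, image_id]

lemma spread_image_inj {A B : Finset ℕ}
    (h : A.image (spread d A) = B.image (spread d B)) : A = B := by
  have := image_unspread d A
  rw [h, image_unspread d B] at this
  exact this.symm

lemma spread_def (A : Finset ℕ) (a : ℕ) :
    spread d A a = a + (A.filter (fun x => x < a)).card * d := rfl

end Spread

open Finset

instance {t d : ℕ} : DecidablePred (RunConstrained (t := t) d) := fun v => by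
  unfold RunConstrained; infer_instance

def suppF {t : ℕ} (v : Fin t → Bool) : Finset (Fin t) :=
  Finset.univ.filter (fun i => v i = true)

def VSet (t d w : ℕ) : Finset (Fin t → Bool) :=
  Finset.univ.filter (fun v => RunConstrained d v ∧ (suppF v).card = w)

noncomputable def Phi (t d : ℕ) (A : Finset ℕ) : Fin t → Bool :=
  fun i => decide ((i : ℕ) ∈ A.image (spread d A))

lemma spread_lt_t {t d w T : ℕ} (hTt : T + (w - 1) * d ≤ t) {A : Finset ℕ}
    (hAr : A ⊆ range T) (hAc : A.card = w) {a : ℕ} (ha : a ∈ A) :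
    spread d A a < t := by
  have haT : a < T := mem_range.mp (hAr ha)
  have hrank : (A.filter (fun x => x < a)).card ≤ w - 1 := by
    have hsub : A.filter (fun x => x < a) ⊆ A.erase a := by
      intro x hx
      have := mem_filter.mp hx
      exact mem_erase.mpr ⟨by omega, this.1⟩
    have := card_le_card hsub
    rw [card_erase_of_mem ha, hAc] at this
    exact this
  have h2 : (A.filter (fun x => x < a)).card * d ≤ (w - 1) * d :=
    Nat.mul_le_mul_right d hrank
  rw [spread_def]
  omega

lemma suppF_Phi_val {t d w T : ℕ} (hTt : T + (w - 1) * d ≤ t) {A : Finset ℕ}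
    (hAr : A ⊆ range T) (hAc : A.card = w) :
    (suppF (Phi t d A)).image Fin.val = A.image (spread d A) := by
  ext x
  simp only [mem_image, suppF, mem_filter, mem_univ, true_and, Phi, decide_eq_true_eq]
  constructor
  · rintro ⟨i, hi, rfl⟩; exact hi
  · intro hx
    have hxt : x < t := by
      obtain ⟨a, ha, rfl⟩ := hx
      exact spread_lt_t hTt hAr hAc ha
    exact ⟨⟨x, hxt⟩, hx, rfl⟩

lemma Phi_mem_VSet {t d w T : ℕ} (hTt : T + (w - 1) * d ≤ t) {A : Finset ℕ}
    (hAr : A ⊆ range T) (hAc : A.card = w) : Phi t d A ∈ VSet t d w := by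
  refine mem_filter.mpr ⟨mem_univ _, ?_, ?_⟩
  · -- run constrained
    intro i j hij hi hj
    simp only [Phi, decide_eq_true_eq] at hi hj
    obtain ⟨a, ha, haeq⟩ := mem_image.mp hi
    obtain ⟨b, hb, hbeq⟩ := mem_image.mp hj
    have hab : a < b := by
      rw [← spread_lt_iff d ha hb, haeq, hbeq]
      exact_mod_cast hij
    have := spread_gap d ha hab
    omega
  · -- card
    have h1 := suppF_Phi_val hTt hAr hAc
    have h2 : ((suppF (Phi t d A)).image Fin.val).card = (suppF (Phi t d A)).card :=
      card_image_of_injective _ Fin.val_injective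
    rw [h1] at h2
    rw [← h2, card_image_of_injOn (spread_injOn d), hAc]

lemma card_VSet_ge (t d w T : ℕ) (hTt : T + (w - 1) * d ≤ t) :
    Nat.choose T w ≤ (VSet t d w).card := by
  have h := Finset.card_le_card_of_injOn (Phi t d)
    (fun A hA => by
      obtain ⟨hAr, hAc⟩ := mem_powersetCard.mp hA
      exact Phi_mem_VSet hTt hAr hAc)
    (fun A hA B hB hAB => by
      obtain ⟨hAr, hAc⟩ := mem_powersetCard.mp hA
      obtain ⟨hBr, hBc⟩ := mem_powersetCard.mp hB
      apply spread_image_inj d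
      rw [← suppF_Phi_val hTt hAr hAc, ← suppF_Phi_val hTt hBr hBc, hAB])
  rwa [card_powersetCard, card_range] at h

lemma count_sub (t d w : ℕ) (B : Finset (Fin t)) :
    ((VSet t d w).filter (fun v => suppF v ⊆ B)).card ≤ Nat.choose B.card w := by
  classical
  have h : ((VSet t d w).filter (fun v => suppF v ⊆ B)).card ≤ (B.powersetCard w).card := by
    apply Finset.card_le_card_of_injOn (fun v => suppF v)
    · intro v hv
      obtain ⟨hvV, hvB⟩ := mem_filter.mp hv
      obtain ⟨-, -, hcard⟩ := mem_filter.mp hvV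
      exact mem_powersetCard.mpr ⟨hvB, hcard⟩
    · intro v hv v' hv' heq
      simp only at heq
      funext i
      have h2 : (i ∈ suppF v) = (i ∈ suppF v') := by rw [heq]
      simp only [suppF, mem_filter, mem_univ, true_and, eq_iff_iff] at h2
      cases hvi : v i <;> cases hvi' : v' i <;> simp_all
  rwa [card_powersetCard] at h

theorem stmt_4 (k n d w t : ℕ) (hk : 2 ≤ k) (hkn : k ≤ n) (hd : 0 < d) (hw : 0 < w)
    (ht : 0 < t) (hwt : w * (k - 1) + (w - 1) * d ≤ t)
    (hineq : (n : ℝ) * (Nat.choose (n - 1) (k - 1) : ℝ) *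
        (((w : ℝ) * ((k : ℝ) - 1) - ((w : ℝ) - 1) / 2) /
          ((t : ℝ) - ((w : ℝ) - 1) * (d : ℝ) - ((w : ℝ) - 1) / 2)) ^ w < 1) :
    ∃ M : Fin t → Fin n → Bool, IsSuperimposedCode k n d t M ∧ ColWeight w M := by
  classical
  set T : ℕ := t - (w - 1) * d with hT
  have hdt : (w - 1) * d ≤ t := le_trans (Nat.le_add_left _ _) hwt
  have hTt : T + (w - 1) * d ≤ t := by rw [hT, Nat.sub_add_cancel hdt]
  have hsT : w * (k - 1) ≤ T := Nat.le_sub_of_add_le hwt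
  have hsw : w ≤ w * (k - 1) := Nat.le_mul_of_pos_right w (by omega)
  have hwT : w ≤ T := hsw.trans hsT
  set V : Finset (Fin t → Bool) := VSet t d w with hVdef
  set Vc : ℕ := V.card with hVc
  have hV : Nat.choose T w ≤ Vc := card_VSet_ge t d w T hTt
  have hVpos : 0 < Vc := lt_of_lt_of_le (Nat.choose_pos hwT) hV
  -- the key numeric inequality
  have hkey : n * Nat.choose (n - 1) (k - 1) * Nat.choose (w * (k - 1)) w
      < Nat.choose T w := by
    have hsc : ((w * (k - 1) : ℕ) : ℝ) = (w : ℝ) * ((k : ℝ) - 1) := by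
      rw [Nat.cast_mul, Nat.cast_sub (by omega : 1 ≤ k), Nat.cast_one]
    have hTc : ((T : ℕ) : ℝ) = (t : ℝ) - ((w : ℝ) - 1) * (d : ℝ) := by
      rw [hT, Nat.cast_sub hdt, Nat.cast_mul, Nat.cast_sub (by omega : 1 ≤ w), Nat.cast_one]
    have hcr := chooseRatio (w * (k - 1)) T w hw hsw hsT
    rw [hsc, hTc] at hcr
    have hC1 : (0 : ℝ) ≤ (n : ℝ) * (Nat.choose (n - 1) (k - 1) : ℝ) := by positivity
    have hTpos : (0 : ℝ) < ((Nat.choose T w : ℕ) : ℝ) := by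
      exact_mod_cast Nat.choose_pos hwT
    have h5 : (n : ℝ) * (Nat.choose (n - 1) (k - 1) : ℝ) * ((Nat.choose (w * (k - 1)) w : ℕ) : ℝ)
        ≤ (n : ℝ) * (Nat.choose (n - 1) (k - 1) : ℝ) * (((Nat.choose T w : ℕ) : ℝ) *
          (((w : ℝ) * ((k : ℝ) - 1) - ((w : ℝ) - 1) / 2) /
            ((t : ℝ) - ((w : ℝ) - 1) * (d : ℝ) - ((w : ℝ) - 1) / 2)) ^ w) := by
      exact mul_le_mul_of_nonneg_left hcr hC1
    have h7 : ((Nat.choose T w : ℕ) : ℝ) *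
          ((n : ℝ) * (Nat.choose (n - 1) (k - 1) : ℝ) *
          (((w : ℝ) * ((k : ℝ) - 1) - ((w : ℝ) - 1) / 2) /
            ((t : ℝ) - ((w : ℝ) - 1) * (d : ℝ) - ((w : ℝ) - 1) / 2)) ^ w)
        < ((Nat.choose T w : ℕ) : ℝ) * 1 := mul_lt_mul_of_pos_left hineq hTpos
    have h8 : ((n * Nat.choose (n - 1) (k - 1) * Nat.choose (w * (k - 1)) w : ℕ) : ℝ)
        < ((Nat.choose T w : ℕ) : ℝ) := by push_cast; nlinarith [h5, h7]
    exact_mod_cast h8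
  -- the probability space
  set G : Finset (Fin n → Fin t → Bool) := Fintype.piFinset (fun _ : Fin n => V) with hGdef
  have hGcard : G.card = Vc ^ n := by
    rw [hGdef, Fintype.card_piFinset]
    simp [hVc]
  obtain ⟨v₀, hv₀⟩ := card_pos.mp hVpos
  -- per (S,j) bad-set bound
  have hBS : ∀ S : Finset (Fin n), S.card = k → ∀ j ∈ S,
      (G.filter (fun f => ∀ i, f j i = true →
        ∃ j' ∈ S, j' ≠ j ∧ f j' i = true)).card
        ≤ Nat.choose (w * (k - 1)) w * Vc ^ (n - 1) := by
    intro S hSk j hjS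
    set Tgt : Finset (Fin n → Fin t → Bool) :=
      Fintype.piFinset (fun j' : Fin n => if j' = j then ({v₀} : Finset _) else V) with hTgt
    have hTgtcard : Tgt.card = Vc ^ (n - 1) := by
      rw [hTgt, Fintype.card_piFinset]
      rw [← Finset.prod_erase_mul Finset.univ _ (mem_univ j)]
      rw [if_pos rfl, card_singleton, mul_one]
      rw [Finset.prod_congr rfl (fun x hx => by rw [if_neg (mem_erase.mp hx).1])]
      rw [Finset.prod_const, card_erase_of_mem (mem_univ j), card_univ, Fintype.card_fin]
    have h := Finset.card_le_mul_card_image_of_maps_to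
      (f := fun f (j' : Fin n) => if j' = j then v₀ else f j')
      (s := G.filter (fun f => ∀ i, f j i = true → ∃ j' ∈ S, j' ≠ j ∧ f j' i = true))
      (t := Tgt)
      (by
        intro f hf
        have hfG : f ∈ G := (mem_filter.mp hf).1
        rw [hTgt, Fintype.mem_piFinset]
        intro j'
        by_cases hj' : j' = j
        · simp [hj']
        · simp only [if_neg hj']
          exact Fintype.mem_piFinset.mp hfG j')
      (Nat.choose (w * (k - 1)) w)
      (by
        intro g hg
        set Bg : Finset (Fin t) := (S.erase j).biUnion (fun j' => suppF (g j')) with hBg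
        have step1 : (Finset.filter (fun a => (fun f (j' : Fin n) =>
              if j' = j then v₀ else f j') a = g)
            (G.filter (fun f => ∀ i, f j i = true → ∃ j' ∈ S, j' ≠ j ∧ f j' i = true))).card
            ≤ ((VSet t d w).filter (fun v => suppF v ⊆ Bg)).card := by
          apply Finset.card_le_card_of_injOn (fun f => f j)
          · intro f hf
            obtain ⟨hf1, hf2⟩ := mem_filter.mp hf
            obtain ⟨hfG, hfbad⟩ := mem_filter.mp hf1
            simp only at hf2
            refine mem_filter.mpr ⟨?_, ?_⟩
            · exact Fintype.mem_piFinset.mp hfG j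
            · intro i hi
              have hfji : f j i = true := by
                simpa [suppF] using hi
              obtain ⟨j', hj'S, hj'ne, hj'true⟩ := hfbad i hfji
              have hgj' : g j' = f j' := by
                have h9 := congrFun hf2 j'
                rw [if_neg hj'ne] at h9
                exact h9.symm
              rw [hBg]
              apply mem_biUnion.mpr
              refine ⟨j', mem_erase.mpr ⟨hj'ne, hj'S⟩, ?_⟩
              simp [suppF, hgj', hj'true]
          · intro f hf f' hf' heq
            simp only at heq
            obtain ⟨-, hf2⟩ := mem_filter.mp hf
            obtain ⟨-, hf'2⟩ := mem_filter.mp hf'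
            simp only at hf2 hf'2
            funext j'
            by_cases hj' : j' = j
            · rw [hj', heq]
            · have e1 := congrFun hf2 j'
              have e2 := congrFun hf'2 j'
              rw [if_neg hj'] at e1 e2
              rw [e1, e2]
        have step2 := count_sub t d w Bg
        have step3 : Bg.card ≤ w * (k - 1) := by
          have h1 : Bg.card ≤ ∑ j' ∈ S.erase j, (suppF (g j')).card := card_biUnion_le
          have h2 : ∀ j' ∈ S.erase j, (suppF (g j')).card = w := by
            intro j' hj'
            have hj'ne := (mem_erase.mp hj').1
            have := Fintype.mem_piFinset.mp (by rwa [hTgt] at hg) j'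
            rw [if_neg hj'ne] at this
            exact ((mem_filter.mp this).2).2
          rw [Finset.sum_congr rfl h2, Finset.sum_const, card_erase_of_mem hjS, hSk,
            smul_eq_mul] at h1
          calc Bg.card ≤ (k - 1) * w := h1
            _ = w * (k - 1) := mul_comm _ _
        have step4 : Nat.choose Bg.card w ≤ Nat.choose (w * (k - 1)) w :=
          Nat.choose_le_choose w step3
        exact le_trans step1 (le_trans step2 step4))
    rwa [hTgtcard] at h
  -- the union bound
  set Bad : Finset (Fin n → Fin t → Bool) := G.filter (fun f =>
    ¬ ∀ S : Finset (Fin n), S.card = k → ∀ j ∈ S,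
      ∃ i, f j i = true ∧ ∀ j' ∈ S, j' ≠ j → f j' i = false) with hBad
  have hBadsub : Bad ⊆ (Finset.univ.powersetCard k).biUnion (fun S => S.biUnion (fun j =>
      G.filter (fun f => ∀ i, f j i = true → ∃ j' ∈ S, j' ≠ j ∧ f j' i = true))) := by
    intro f hf
    obtain ⟨hfG, hnG⟩ := mem_filter.mp hf
    push_neg at hnG
    obtain ⟨S, hSk, j, hjS, hni⟩ := hnG
    apply mem_biUnion.mpr
    refine ⟨S, Finset.mem_powersetCard_univ.mpr hSk, mem_biUnion.mpr ⟨j, hjS, ?_⟩⟩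
    refine mem_filter.mpr ⟨hfG, ?_⟩
    intro i hi
    obtain ⟨j', hj'S, hj'ne, hj'f⟩ := hni i hi
    refine ⟨j', hj'S, hj'ne, ?_⟩
    revert hj'f
    cases f j' i <;> simp
  have hBadcard : Bad.card ≤ Nat.choose n k *
      (k * (Nat.choose (w * (k - 1)) w * Vc ^ (n - 1))) := by
    refine le_trans (card_le_card hBadsub) (le_trans card_biUnion_le ?_)
    have hinner : ∀ S ∈ Finset.univ.powersetCard k,
        (S.biUnion (fun j => G.filter (fun f => ∀ i, f j i = true →
          ∃ j' ∈ S, j' ≠ j ∧ f j' i = true))).card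
          ≤ k * (Nat.choose (w * (k - 1)) w * Vc ^ (n - 1)) := by
      intro S hS
      have hSk := Finset.mem_powersetCard_univ.mp hS
      refine le_trans card_biUnion_le ?_
      have := Finset.sum_le_sum (fun j hj => hBS S hSk j hj)
      refine le_trans this ?_
      rw [Finset.sum_const, hSk, smul_eq_mul]
    refine le_trans (Finset.sum_le_sum hinner) ?_
    rw [Finset.sum_const, Finset.card_powersetCard, card_univ, Fintype.card_fin, smul_eq_mul]
  -- conclude Bad is a proper subset
  have hid : k * Nat.choose n k = n * Nat.choose (n - 1) (k - 1) := by
    have h := Nat.add_one_mul_choose_eq (n - 1) (k - 1)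
    rw [(by omega : n - 1 + 1 = n), (by omega : k - 1 + 1 = k)] at h
    rw [mul_comm]
    exact h.symm
  have hfinal : Bad.card < G.card := by
    have hpow : 0 < Vc ^ (n - 1) := Nat.pow_pos hVpos
    calc Bad.card ≤ Nat.choose n k * (k * (Nat.choose (w * (k - 1)) w * Vc ^ (n - 1))) :=
          hBadcard
      _ = (k * Nat.choose n k) * Nat.choose (w * (k - 1)) w * Vc ^ (n - 1) := by ring
      _ = (n * Nat.choose (n - 1) (k - 1) * Nat.choose (w * (k - 1)) w) * Vc ^ (n - 1) := by
          rw [hid]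
      _ < Nat.choose T w * Vc ^ (n - 1) := by
          exact (Nat.mul_lt_mul_right hpow).mpr hkey
      _ ≤ Vc * Vc ^ (n - 1) := Nat.mul_le_mul_right _ hV
      _ = Vc ^ n := by
          rw [← pow_succ']
          congr 1
          omega
      _ = G.card := hGcard.symm
  have hBsubG : Bad ⊆ G := by
    rw [hBad]; exact filter_subset _ _
  have hne : (G \ Bad).Nonempty := by
    rw [← card_pos, card_sdiff_of_subset hBsubG]
    omega
  obtain ⟨f, hf⟩ := hne
  obtain ⟨hfG, hfnB⟩ := mem_sdiff.mp hf
  have hGood : ∀ S : Finset (Fin n), S.card = k → ∀ j ∈ S,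
      ∃ i, f j i = true ∧ ∀ j' ∈ S, j' ≠ j → f j' i = false := by
    by_contra hc
    exact hfnB (mem_filter.mpr ⟨hfG, hc⟩)
  have hfV : ∀ j, f j ∈ VSet t d w := fun j => Fintype.mem_piFinset.mp hfG j
  refine ⟨fun i j => f j i, ⟨?_, ?_⟩, ?_⟩
  · intro j
    exact ((mem_filter.mp (hfV j)).2).1
  · exact hGood
  · intro j
    exact ((mem_filter.mp (hfV j)).2).2
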